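/- arXiv:2603.19999 — 8 statements merged into one kernel-verified Lean document; each statement's English description precedes it below -/
import Mathlib

section
/- Let N be a positive integer, let a, b ∈ ℂ^N have unit-modulus entries, let c > 0 and α > 0. Then for every vector ψ ∈ ℂ^N with |ψ_n| ≤ α for all n, one has |∑_{n=1}^N ψ_n a_n b_n|² / (1 + c · ∑_{n=1}^N |ψ_n|²) ≤ α² N² / (1 + c α² N), and equality holds for ψ_n = α · conj(a_n b_n). -/
open Finset

/-- Active-RIS configuration optimization without a direct link: for unit-modulus vectors
`a, b`, constants `c > 0` and per-element amplitude cap `α > 0`, any configuration `ψ` with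
`|ψ n| ≤ α` satisfies
`|∑ ψ n * a n * b n|² / (1 + c ∑ |ψ n|²) ≤ α² N² / (1 + c α² N)`,
with equality for `ψ n = α * conj (a n * b n)`. -/
theorem active_ris_config_opt (N : ℕ) (hN : 0 < N) (a b : Fin N → ℂ)
    (ha : ∀ n, ‖a n‖ = 1) (hb : ∀ n, ‖b n‖ = 1)
    (c α : ℝ) (hc : 0 < c) (hα : 0 < α) :
    (∀ ψ : Fin N → ℂ, (∀ n, ‖ψ n‖ ≤ α) →
      ‖∑ n, ψ n * a n * b n‖ ^ 2 / (1 + c * ∑ n, ‖ψ n‖ ^ 2)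
        ≤ α ^ 2 * (N : ℝ) ^ 2 / (1 + c * α ^ 2 * (N : ℝ))) ∧
    ‖∑ n, (α : ℂ) * (starRingEnd ℂ) (a n * b n) * a n * b n‖ ^ 2 /
        (1 + c * ∑ n, ‖(α : ℂ) * (starRingEnd ℂ) (a n * b n)‖ ^ 2)
      = α ^ 2 * (N : ℝ) ^ 2 / (1 + c * α ^ 2 * (N : ℝ)) := by
  constructor
  · intro ψ hψ
    set T : ℝ := ∑ n, ‖ψ n‖ ^ 2 with hT
    have hT0 : 0 ≤ T := Finset.sum_nonneg fun n _ => sq_nonneg _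
    have hTle : T ≤ α ^ 2 * N := by
      calc T ≤ ∑ _n : Fin N, α ^ 2 := by
              apply Finset.sum_le_sum
              intro n _
              exact pow_le_pow_left₀ (norm_nonneg _) (hψ n) 2
        _ = α ^ 2 * N := by simp [mul_comm]
    have habs : ‖∑ n, ψ n * a n * b n‖ ^ 2 ≤ N * T := by
      have h1 : ‖∑ n, ψ n * a n * b n‖ ≤ ∑ n, ‖ψ n‖ := by
        refine (norm_sum_le _ _).trans (le_of_eq ?_)
        apply Finset.sum_congr rfl
        intro n _
        simp [map_mul, ha n, hb n]
      have h2 : (∑ n, ‖ψ n‖) ^ 2 ≤ (N : ℝ) * T := by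
        simpa using sq_sum_le_card_mul_sum_sq
          (s := Finset.univ) (f := fun n : Fin N => ‖ψ n‖)
      calc ‖∑ n, ψ n * a n * b n‖ ^ 2
          ≤ (∑ n, ‖ψ n‖) ^ 2 :=
            pow_le_pow_left₀ (norm_nonneg _) h1 2
        _ ≤ (N : ℝ) * T := h2
    have hden1 : 0 < 1 + c * T := by positivity
    have hden2 : 0 < 1 + c * α ^ 2 * N := by positivity
    have step1 : ‖∑ n, ψ n * a n * b n‖ ^ 2 / (1 + c * T)
        ≤ (N : ℝ) * T / (1 + c * T) := by
      gcongr
    have step2 : (N : ℝ) * T / (1 + c * T) ≤ α ^ 2 * (N : ℝ) ^ 2 / (1 + c * α ^ 2 * N) := by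
      rw [div_le_div_iff₀ hden1 hden2]
      nlinarith [mul_nonneg hc.le hT0]
    exact step1.trans step2
  · have key : ∀ n : Fin N, (α : ℂ) * (starRingEnd ℂ) (a n * b n) * a n * b n = (α : ℂ) := by
      intro n
      have : (starRingEnd ℂ) (a n * b n) * (a n * b n) = 1 := by
        rw [Complex.conj_mul']
        norm_cast
        simp [Complex.normSq_eq_norm_sq, map_mul, ha n, hb n]
      calc (α : ℂ) * (starRingEnd ℂ) (a n * b n) * a n * b n
          = (α : ℂ) * ((starRingEnd ℂ) (a n * b n) * (a n * b n)) := by ring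
        _ = (α : ℂ) := by rw [this, mul_one]
    have keyabs : ∀ n : Fin N, ‖(α : ℂ) * (starRingEnd ℂ) (a n * b n)‖ ^ 2 = α ^ 2 := by
      intro n
      simp [map_mul, ha n, hb n, abs_of_pos hα]
    have hsum1 : (∑ n, (α : ℂ) * (starRingEnd ℂ) (a n * b n) * a n * b n) = (N : ℂ) * α := by
      rw [Finset.sum_congr rfl fun n _ => key n]
      simp [mul_comm]
    have hsum2 : (∑ n, ‖(α : ℂ) * (starRingEnd ℂ) (a n * b n)‖ ^ 2) = N * α ^ 2 := by
      rw [Finset.sum_congr rfl fun n _ => keyabs n]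
      simp [mul_comm]
    rw [hsum1, hsum2]
    have : ‖(N : ℂ) * α‖ = N * α := by
      simp [map_mul, Complex.norm_natCast, abs_of_pos hα]
    rw [this]
    ring_nf
end

section
/- Let P, β₁, β₂, σ², M, N be positive reals with N² M β₂ < 1, and let α ≥ 0. Then α² P M β₁ β₂ / (σ² (1 + α² β₂ M)) ≥ P β₁ β₂ N² M / σ² if and only if α ≥ N / √(1 − N² M β₂). -/
/-- NCR vs. passive RIS without a direct link: under `N² M β₂ < 1`, the NCR SNR exceeds the
passive-RIS SNR if and only if `α ≥ N / √(1 − N² M β₂)`. -/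
theorem ncr_beats_passive_ris_iff (P β₁ β₂ σ2 M N : ℝ)
    (hP : 0 < P) (h1 : 0 < β₁) (h2 : 0 < β₂) (hσ : 0 < σ2) (hM : 0 < M) (hN : 0 < N)
    (hcond : N ^ 2 * M * β₂ < 1) (α : ℝ) (hα : 0 ≤ α) :
    α ^ 2 * P * M * β₁ * β₂ / (σ2 * (1 + α ^ 2 * β₂ * M)) ≥ P * β₁ * β₂ * N ^ 2 * M / σ2
      ↔ α ≥ N / Real.sqrt (1 - N ^ 2 * M * β₂) := by
  have hD : 0 < 1 - N ^ 2 * M * β₂ := by linarith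
  set s := Real.sqrt (1 - N ^ 2 * M * β₂) with hs
  have hs0 : 0 < s := Real.sqrt_pos.mpr hD
  have hs2 : s ^ 2 = 1 - N ^ 2 * M * β₂ := Real.sq_sqrt hD.le
  have hden : 0 < σ2 * (1 + α ^ 2 * β₂ * M) := by positivity
  rw [ge_iff_le, div_le_div_iff₀ hσ hden, ge_iff_le, div_le_iff₀ hs0]
  have hC : 0 < P * β₁ * β₂ * M * σ2 := by positivity
  constructor
  · intro h
    have h' : N ^ 2 * (1 + α ^ 2 * β₂ * M) * (P * β₁ * β₂ * M * σ2)
        ≤ α ^ 2 * (P * β₁ * β₂ * M * σ2) := by linarith [h]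
    have key : N ^ 2 * (1 + α ^ 2 * β₂ * M) ≤ α ^ 2 := le_of_mul_le_mul_right h' hC
    nlinarith [mul_nonneg hα hs0.le, sq_nonneg (α * s - N), sq_nonneg (α * s + N)]
  · intro h
    have hN2 : N ^ 2 ≤ (α * s) ^ 2 := by
      nlinarith [mul_nonneg hα hs0.le]
    have key : N ^ 2 * (1 + α ^ 2 * β₂ * M) ≤ α ^ 2 := by nlinarith
    have h' := mul_le_mul_of_nonneg_right key hC.le
    linarith [h']
end

section
/- Let P, β₁, β₂, σ², M, N be positive reals with N² M β₂ ≥ 1. Then for every α ≥ 0, α² P M β₁ β₂ / (σ² (1 + α² β₂ M)) < P β₁ β₂ N² M / σ²; that is, the passive RIS achieves a strictly higher SNR than the NCR for every amplification gain. -/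
/-- NCR vs. passive RIS without a direct link: if `N² M β₂ ≥ 1`, the passive RIS achieves a
strictly higher SNR than the NCR for every amplification gain `α ≥ 0`. -/
theorem passive_ris_always_beats_ncr (P β₁ β₂ σ2 M N : ℝ)
    (hP : 0 < P) (h1 : 0 < β₁) (h2 : 0 < β₂) (hσ : 0 < σ2) (hM : 0 < M) (hN : 0 < N)
    (hcond : 1 ≤ N ^ 2 * M * β₂) :
    ∀ α : ℝ, 0 ≤ α →
      α ^ 2 * P * M * β₁ * β₂ / (σ2 * (1 + α ^ 2 * β₂ * M)) < P * β₁ * β₂ * N ^ 2 * M / σ2 := by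
  intro α hα
  have hden : 0 < σ2 * (1 + α ^ 2 * β₂ * M) := by positivity
  rw [div_lt_div_iff₀ hden hσ]
  have hK : 0 < P * M * β₁ * β₂ := by positivity
  have key : α ^ 2 * σ2 < N ^ 2 * (σ2 * (1 + α ^ 2 * β₂ * M)) := by
    nlinarith [mul_nonneg (mul_nonneg hσ.le (sq_nonneg α)) (sub_nonneg.mpr hcond),
      mul_pos hσ (mul_pos (mul_pos hN hN) h2)]
  nlinarith [mul_lt_mul_of_pos_left key hK]
end

section
/- Let P, β₁, β₂, σ², M, N, α_A be positive reals with (N² − N) α_A² M β₂ < 1, and let α ≥ 0. Then α² P M β₁ β₂ / (σ² (1 + α² β₂ M)) ≥ α_A² P β₁ β₂ N² M / (σ² (1 + α_A² β₂ M N)) if and only if α ≥ α_A N / √(1 − (N² − N) α_A² M β₂). -/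
/-- NCR vs. active RIS without a direct link: under `(N² − N) α_A² M β₂ < 1`, the NCR SNR
exceeds the active-RIS SNR if and only if `α ≥ α_A N / √(1 − (N² − N) α_A² M β₂)`. -/
theorem ncr_beats_active_ris_iff (P β₁ β₂ σ2 M N αA : ℝ)
    (hP : 0 < P) (h1 : 0 < β₁) (h2 : 0 < β₂) (hσ : 0 < σ2) (hM : 0 < M) (hN : 0 < N)
    (hαA : 0 < αA) (hcond : (N ^ 2 - N) * αA ^ 2 * M * β₂ < 1) (α : ℝ) (hα : 0 ≤ α) :
    α ^ 2 * P * M * β₁ * β₂ / (σ2 * (1 + α ^ 2 * β₂ * M))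
        ≥ αA ^ 2 * P * β₁ * β₂ * N ^ 2 * M / (σ2 * (1 + αA ^ 2 * β₂ * M * N))
      ↔ α ≥ αA * N / Real.sqrt (1 - (N ^ 2 - N) * αA ^ 2 * M * β₂) := by
  have hD : 0 < 1 - (N ^ 2 - N) * αA ^ 2 * M * β₂ := by linarith
  set D : ℝ := 1 - (N ^ 2 - N) * αA ^ 2 * M * β₂ with hDdef
  have hsD : 0 < Real.sqrt D := Real.sqrt_pos.mpr hD
  have hsq : Real.sqrt D ^ 2 = D := Real.sq_sqrt hD.le
  have hden1 : 0 < σ2 * (1 + α ^ 2 * β₂ * M) := by positivity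
  have hden2 : 0 < σ2 * (1 + αA ^ 2 * β₂ * M * N) := by positivity
  have key1 : α ^ 2 * P * M * β₁ * β₂ / (σ2 * (1 + α ^ 2 * β₂ * M))
        ≥ αA ^ 2 * P * β₁ * β₂ * N ^ 2 * M / (σ2 * (1 + αA ^ 2 * β₂ * M * N))
      ↔ α ^ 2 * D ≥ αA ^ 2 * N ^ 2 := by
    rw [ge_iff_le, div_le_div_iff₀ hden2 hden1, ge_iff_le]
    have hK : 0 < P * M * β₁ * β₂ * σ2 := by positivity
    have e : P * M * β₁ * β₂ * σ2 * (α ^ 2 * D) - P * M * β₁ * β₂ * σ2 * (αA ^ 2 * N ^ 2)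
        = α ^ 2 * P * M * β₁ * β₂ * (σ2 * (1 + αA ^ 2 * β₂ * M * N))
          - αA ^ 2 * P * β₁ * β₂ * N ^ 2 * M * (σ2 * (1 + α ^ 2 * β₂ * M)) := by
      rw [hDdef]; ring
    constructor
    · intro h
      exact le_of_mul_le_mul_left (by linarith) hK
    · intro h
      have h' := mul_le_mul_of_nonneg_left h hK.le
      linarith
  rw [key1, ge_iff_le, ge_iff_le, div_le_iff₀ hsD]
  constructor
  · intro h
    have h' := Real.sqrt_le_sqrt h
    rwa [show αA ^ 2 * N ^ 2 = (αA * N) ^ 2 by ring,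
      show α ^ 2 * D = (α * Real.sqrt D) ^ 2 by rw [mul_pow, hsq],
      Real.sqrt_sq (by positivity), Real.sqrt_sq (by positivity)] at h'
  · intro h
    nlinarith [mul_self_le_mul_self (by positivity : (0:ℝ) ≤ αA * N) h, hsq]
end

section
/- Let P, β₁, β₂, σ², M, N, α_A be positive reals with (N² − N) α_A² M β₂ ≥ 1. Then for every α ≥ 0, α² P M β₁ β₂ / (σ² (1 + α² β₂ M)) < α_A² P β₁ β₂ N² M / (σ² (1 + α_A² β₂ M N)); that is, the active RIS achieves a strictly higher SNR than the NCR for every NCR amplification gain. -/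
/-- NCR vs. active RIS without a direct link: if `(N² − N) α_A² M β₂ ≥ 1`, the active RIS
achieves a strictly higher SNR than the NCR for every NCR amplification gain `α ≥ 0`. -/
theorem active_ris_always_beats_ncr (P β₁ β₂ σ2 M N αA : ℝ)
    (hP : 0 < P) (h1 : 0 < β₁) (h2 : 0 < β₂) (hσ : 0 < σ2) (hM : 0 < M) (hN : 0 < N)
    (hαA : 0 < αA) (hcond : 1 ≤ (N ^ 2 - N) * αA ^ 2 * M * β₂) :
    ∀ α : ℝ, 0 ≤ α →
      α ^ 2 * P * M * β₁ * β₂ / (σ2 * (1 + α ^ 2 * β₂ * M))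
        < αA ^ 2 * P * β₁ * β₂ * N ^ 2 * M / (σ2 * (1 + αA ^ 2 * β₂ * M * N)) := by
  intro α hα
  have hα2 : 0 ≤ α ^ 2 := sq_nonneg α
  have hd1 : 0 < σ2 * (1 + α ^ 2 * β₂ * M) := by positivity
  have hd2 : 0 < σ2 * (1 + αA ^ 2 * β₂ * M * N) := by positivity
  have hmid : α ^ 2 * P * M * β₁ * β₂ / (σ2 * (1 + α ^ 2 * β₂ * M)) < P * β₁ / σ2 := by
    rw [div_lt_div_iff₀ hd1 hσ]
    nlinarith [mul_pos hP h1, mul_pos (mul_pos hP h1) hσ]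
  have hmid2 : P * β₁ / σ2 ≤ αA ^ 2 * P * β₁ * β₂ * N ^ 2 * M / (σ2 * (1 + αA ^ 2 * β₂ * M * N)) := by
    rw [div_le_div_iff₀ hσ hd2]
    nlinarith [mul_pos (mul_pos hP h1) hσ, mul_pos hP h1]
  linarith
end

section
/- Let M, N be positive integers, β₁, β₂ > 0, let h₃ ∈ ℂ^M, let a₂₁ ∈ ℂ^M have unit-modulus entries (so ‖a₂₁‖² = M), and let a₁, a₂₂ ∈ ℂ^N have unit-modulus entries. Then for every ψ ∈ ℂ^N with |ψ_n| = 1 for all n, ‖h₃ + √(β₁β₂) (∑_{n=1}^N ψ_n (a₂₂)_n (a₁)_n) a₂₁‖² ≤ ‖h₃‖² + β₁β₂ N² M + 2√(β₁β₂) N |⟨a₂₁, h₃⟩|, and there exists a unit-modulus configuration ψ achieving equality; here ⟨a₂₁, h₃⟩ = ∑_{m=1}^M conj((a₂₁)_m) (h₃)_m. -/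
open Finset

lemma ris_expand {M : ℕ} (h₃ a21 : Fin M → ℂ) (ha21 : ∀ m, ‖a21 m‖ = 1) (z : ℂ) :
    ∑ m, ‖h₃ m + z * a21 m‖ ^ 2
      = (∑ m, ‖h₃ m‖ ^ 2) + Complex.normSq z * M
        + 2 * ((starRingEnd ℂ) z * ∑ m, (starRingEnd ℂ) (a21 m) * h₃ m).re := by
  have key : ∀ m, ‖h₃ m + z * a21 m‖ ^ 2
      = ‖h₃ m‖ ^ 2 + Complex.normSq z
        + 2 * ((starRingEnd ℂ) z * ((starRingEnd ℂ) (a21 m) * h₃ m)).re := by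
    intro m
    rw [Complex.sq_norm, Complex.sq_norm, Complex.normSq_add]
    have h1 : Complex.normSq (z * a21 m) = Complex.normSq z := by
      rw [Complex.normSq_mul, ← Complex.sq_norm (a21 m), ha21 m]; ring
    have h2 : h₃ m * (starRingEnd ℂ) (z * a21 m)
        = (starRingEnd ℂ) z * ((starRingEnd ℂ) (a21 m) * h₃ m) := by
      rw [map_mul]; ring
    rw [h1, h2]
  rw [Finset.sum_congr rfl fun m _ => key m]
  rw [Finset.sum_add_distrib, Finset.sum_add_distrib, Finset.sum_const, ← Finset.mul_sum,
    ← Complex.re_sum, ← Finset.mul_sum]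
  simp [mul_comm]

/-- Passive-RIS optimization with a direct BS–UE channel `h₃`: for every unit-modulus
configuration `ψ`, the squared norm of the overall channel
`h₃ + √(β₁β₂) (∑ ψ n (a₂₂)_n (a₁)_n) a₂₁` is at most
`‖h₃‖² + β₁β₂ N² M + 2√(β₁β₂) N |⟨a₂₁, h₃⟩|`, and some unit-modulus `ψ` achieves equality. -/
theorem passive_ris_with_direct_link (M N : ℕ) (hM : 0 < M) (hN : 0 < N)
    (β₁ β₂ : ℝ) (h1 : 0 < β₁) (h2 : 0 < β₂)
    (h₃ a21 : Fin M → ℂ) (ha21 : ∀ m, ‖a21 m‖ = 1)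
    (a1 a22 : Fin N → ℂ)
    (ha1 : ∀ n, ‖a1 n‖ = 1) (ha22 : ∀ n, ‖a22 n‖ = 1) :
    (∀ ψ : Fin N → ℂ, (∀ n, ‖ψ n‖ = 1) →
      ∑ m, ‖h₃ m +
          (Real.sqrt (β₁ * β₂) : ℂ) * (∑ n, ψ n * a22 n * a1 n) * a21 m‖ ^ 2
        ≤ (∑ m, ‖h₃ m‖ ^ 2) + β₁ * β₂ * (N : ℝ) ^ 2 * (M : ℝ)
          + 2 * Real.sqrt (β₁ * β₂) * (N : ℝ) *
              ‖∑ m, (starRingEnd ℂ) (a21 m) * h₃ m‖) ∧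
    (∃ ψ : Fin N → ℂ, (∀ n, ‖ψ n‖ = 1) ∧
      ∑ m, ‖h₃ m +
          (Real.sqrt (β₁ * β₂) : ℂ) * (∑ n, ψ n * a22 n * a1 n) * a21 m‖ ^ 2
        = (∑ m, ‖h₃ m‖ ^ 2) + β₁ * β₂ * (N : ℝ) ^ 2 * (M : ℝ)
          + 2 * Real.sqrt (β₁ * β₂) * (N : ℝ) *
              ‖∑ m, (starRingEnd ℂ) (a21 m) * h₃ m‖) := by
  set c : ℝ := Real.sqrt (β₁ * β₂) with hc
  have hc0 : 0 ≤ c := Real.sqrt_nonneg _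
  have hc2 : c ^ 2 = β₁ * β₂ := Real.sq_sqrt (by positivity)
  set g : ℂ := ∑ m, (starRingEnd ℂ) (a21 m) * h₃ m with hg
  constructor
  · intro ψ hψ
    set s : ℂ := ∑ n, ψ n * a22 n * a1 n with hs
    have habs_s : ‖s‖ ≤ N := by
      calc ‖s‖ ≤ ∑ n, ‖ψ n * a22 n * a1 n‖ :=
            norm_sum_le _ _
        _ = ∑ n : Fin N, (1 : ℝ) := by
            refine Finset.sum_congr rfl fun n _ => ?_
            rw [norm_mul, norm_mul, hψ n, ha22 n, ha1 n]; ring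
        _ = N := by simp
    have hmul : ∀ m, (c : ℂ) * s * a21 m = ((c : ℂ) * s) * a21 m := fun m => rfl
    rw [ris_expand h₃ a21 ha21 ((c : ℂ) * s)]
    have hns : Complex.normSq ((c : ℂ) * s) ≤ β₁ * β₂ * (N : ℝ) ^ 2 := by
      rw [← Complex.sq_norm, norm_mul, Complex.norm_of_nonneg hc0, mul_pow, ← hc2]
      have : ‖s‖ ^ 2 ≤ (N : ℝ) ^ 2 :=
        pow_le_pow_left₀ (norm_nonneg s) habs_s 2
      nlinarith [sq_nonneg c]
    have hre : ((starRingEnd ℂ) ((c : ℂ) * s) * g).re ≤ c * N * ‖g‖ := by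
      calc ((starRingEnd ℂ) ((c : ℂ) * s) * g).re
          ≤ ‖(starRingEnd ℂ) ((c : ℂ) * s) * g‖ := Complex.re_le_norm _
        _ = c * (‖s‖ * ‖g‖) := by
            rw [norm_mul, Complex.norm_conj, norm_mul,
              Complex.norm_of_nonneg hc0, mul_assoc]
        _ ≤ c * ((N : ℝ) * ‖g‖) := by
            have := mul_le_mul_of_nonneg_right habs_s (norm_nonneg g)
            exact mul_le_mul_of_nonneg_left this hc0
        _ = c * N * ‖g‖ := by ring
    nlinarith [norm_nonneg g]
  · set u : ℂ := if g = 0 then 1 else g / (‖g‖ : ℂ) with hu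
    have habs_u : ‖u‖ = 1 := by
      rw [hu]; split_ifs with h
      · simp
      · rw [norm_div, Complex.norm_real, norm_norm]
        exact div_self (norm_ne_zero_iff.mpr h)

    have hug : (starRingEnd ℂ) u * g = (‖g‖ : ℂ) := by
      rw [hu]; split_ifs with h
      · simp [h]
      · have hag : (‖g‖ : ℂ) ≠ 0 := by
          exact_mod_cast norm_ne_zero_iff.mpr h
        rw [map_div₀, Complex.conj_ofReal, div_mul_eq_mul_div,
          ← Complex.normSq_eq_conj_mul_self, ← Complex.sq_norm]
        push_cast
        rw [sq, mul_div_assoc, div_self hag, mul_one]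
    refine ⟨fun n => u * (starRingEnd ℂ) (a22 n * a1 n), fun n => ?_, ?_⟩
    · rw [norm_mul, habs_u, Complex.norm_conj, norm_mul, ha22 n, ha1 n]; ring
    · have hsum : (∑ n, (u * (starRingEnd ℂ) (a22 n * a1 n)) * a22 n * a1 n)
          = u * N := by
        have : ∀ n : Fin N, (u * (starRingEnd ℂ) (a22 n * a1 n)) * a22 n * a1 n = u := by
          intro n
          have h1 : (starRingEnd ℂ) (a22 n * a1 n) * (a22 n * a1 n) = 1 := by
            have hns : Complex.normSq (a22 n * a1 n) = 1 := by
              rw [← Complex.sq_norm, norm_mul, ha22 n, ha1 n]; norm_num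
            rw [← Complex.normSq_eq_conj_mul_self, hns, Complex.ofReal_one]
          calc (u * (starRingEnd ℂ) (a22 n * a1 n)) * a22 n * a1 n
              = u * ((starRingEnd ℂ) (a22 n * a1 n) * (a22 n * a1 n)) := by ring
            _ = u := by rw [h1, mul_one]
        rw [Finset.sum_congr rfl fun n _ => this n]
        rw [Finset.sum_const, Finset.card_univ, Fintype.card_fin, nsmul_eq_mul, mul_comm]
      rw [hsum, ris_expand h₃ a21 ha21 ((c:ℂ) * (u * N))]
      have e1 : Complex.normSq ((c:ℂ) * (u * N)) = β₁ * β₂ * (N:ℝ)^2 := by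
        rw [← Complex.sq_norm, norm_mul, norm_mul, Complex.norm_of_nonneg hc0,
          habs_u, Complex.norm_natCast, one_mul, mul_pow, hc2]
      have e2 : ((starRingEnd ℂ) ((c:ℂ) * (u * N)) * g).re = c * N * ‖g‖ := by
        have : (starRingEnd ℂ) ((c:ℂ) * (u * N)) * g
            = ((c * N * ‖g‖ : ℝ) : ℂ) := by
          rw [map_mul, map_mul, Complex.conj_ofReal]
          have : (starRingEnd ℂ) ((N:ℕ):ℂ) = ((N:ℕ):ℂ) := by
            simp
          rw [this]
          push_cast
          rw [mul_comm ((starRingEnd ℂ) u) ((N:ℕ):ℂ), mul_assoc, mul_assoc, hug]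
          push_cast; ring
        rw [this, Complex.ofReal_re]
      rw [e1, e2]; ring
end

section
/- Let N be a positive integer, let a > 0, e ≥ 0, b ≥ 0, c > 0, s > 0 and α_max ≥ 0 be reals, and define g(r) = (a (∑_{n=1}^N r_n)² − e ∑_{n=1}^N r_n² + b ∑_{n=1}^N r_n) / (s + c ∑_{n=1}^N r_n²) for r ∈ ℝ^N. Then for every r ∈ [0, α_max]^N there exists t ∈ [0, α_max] such that g(t, t, …, t) ≥ g(r); consequently, the supremum of g over the box [0, α_max]^N equals its supremum over constant vectors, i.e., equal amplitudes are optimal. -/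
open Finset

/-- The active-RIS SNR (with optimal phases, direct link present) as a function of the
per-element amplitudes `r ∈ ℝ^N`. -/
noncomputable def risAmpObj (N : ℕ) (a e b c s : ℝ) (r : Fin N → ℝ) : ℝ :=
  (a * (∑ n, r n) ^ 2 - e * ∑ n, r n ^ 2 + b * ∑ n, r n) / (s + c * ∑ n, r n ^ 2)

lemma risAmpObj_const (N : ℕ) (a e b c s t : ℝ) :
    risAmpObj N a e b c s (fun _ => t)
      = (a * (N * t) ^ 2 - e * (N * t ^ 2) + b * (N * t)) / (s + c * (N * t ^ 2)) := by
  simp [risAmpObj, Finset.sum_const, mul_comm]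

lemma risAmpObj_key (N : ℕ) (hN : 0 < N) (a e b c s αmax : ℝ)
    (ha : 0 < a) (he : 0 ≤ e) (hb : 0 ≤ b) (hc : 0 < c) (hs : 0 < s) (hαmax : 0 ≤ αmax)
    (r : Fin N → ℝ) (hr : ∀ n, r n ∈ Set.Icc (0 : ℝ) αmax) :
    ∃ t ∈ Set.Icc (0 : ℝ) αmax,
      risAmpObj N a e b c s (fun _ => t) ≥ risAmpObj N a e b c s r := by
  set S := ∑ n, r n with hS
  set Q := ∑ n, r n ^ 2 with hQ
  have hNpos : (0 : ℝ) < N := by exact_mod_cast hN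
  have hS0 : 0 ≤ S := Finset.sum_nonneg fun n _ => (hr n).1
  have hQ0 : 0 ≤ Q := Finset.sum_nonneg fun n _ => sq_nonneg _
  have hSle : S ≤ N * αmax := by
    calc S ≤ ∑ _n : Fin N, αmax := Finset.sum_le_sum fun n _ => (hr n).2
    _ = N * αmax := by simp [mul_comm]
  have hCS : S ^ 2 ≤ N * Q := by
    have := sq_sum_le_card_mul_sum_sq (s := Finset.univ) (f := r)
    simpa [hS, hQ] using this
  have hden : 0 < s + c * Q := by positivity
  rcases le_or_gt (a * S ^ 2 - e * Q + b * S) 0 with hnum | hnum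
  · refine ⟨0, ⟨le_refl _, hαmax⟩, ?_⟩
    rw [risAmpObj_const]
    simp only [mul_zero, ne_eq]
    rw [show (0:ℝ)^2 = 0 by ring]
    simp only [mul_zero, add_zero, sub_zero, zero_div]  -- maybe adjust
    exact div_nonpos_of_nonpos_of_nonneg hnum hden.le
  · refine ⟨S / N, ⟨by positivity, ?_⟩, ?_⟩
    · rw [div_le_iff₀ hNpos]; linarith [hSle]
    · rw [risAmpObj_const]
      have h1 : (N : ℝ) * (S / N) = S := by field_simp
      have h2 : (N : ℝ) * (S / N) ^ 2 = S ^ 2 / N := by field_simp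
      rw [h1, h2]
      have hQ' : S ^ 2 / N ≤ Q := by
        rw [div_le_iff₀ hNpos]; linarith [hCS]
      have hQ'0 : 0 ≤ S ^ 2 / N := by positivity
      have hden' : 0 < s + c * (S ^ 2 / N) := by positivity
      apply div_le_div₀
      · nlinarith
      · nlinarith
      · exact hden'
      · nlinarith
  
/-- Equal amplitudes are optimal: for every `r ∈ [0, α_max]^N` there is `t ∈ [0, α_max]`
with `g(t, …, t) ≥ g(r)`; consequently the supremum of `g` over the box equals its
supremum over constant vectors. -/
theorem equal_amplitudes_optimal (N : ℕ) (hN : 0 < N) (a e b c s αmax : ℝ)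
    (ha : 0 < a) (he : 0 ≤ e) (hb : 0 ≤ b) (hc : 0 < c) (hs : 0 < s) (hαmax : 0 ≤ αmax) :
    (∀ r : Fin N → ℝ, (∀ n, r n ∈ Set.Icc (0 : ℝ) αmax) →
      ∃ t ∈ Set.Icc (0 : ℝ) αmax,
        risAmpObj N a e b c s (fun _ => t) ≥ risAmpObj N a e b c s r) ∧
    sSup (risAmpObj N a e b c s '' {r | ∀ n, r n ∈ Set.Icc (0 : ℝ) αmax})
      = sSup ((fun t : ℝ => risAmpObj N a e b c s (fun _ => t)) '' Set.Icc (0 : ℝ) αmax) := by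
  have key := risAmpObj_key N hN a e b c s αmax ha he hb hc hs hαmax
  refine ⟨key, ?_⟩
  -- bound on the box
  set B := (a * (N * αmax) ^ 2 + b * (N * αmax)) / s with hB
  have hNpos : (0 : ℝ) < N := by exact_mod_cast hN
  have hB0 : 0 ≤ B := by positivity
  have hbound : ∀ r : Fin N → ℝ, (∀ n, r n ∈ Set.Icc (0 : ℝ) αmax) →
      risAmpObj N a e b c s r ≤ B := by
    intro r hr
    have hS0 : 0 ≤ ∑ n, r n := Finset.sum_nonneg fun n _ => (hr n).1
    have hQ0 : 0 ≤ ∑ n, r n ^ 2 := Finset.sum_nonneg fun n _ => sq_nonneg _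
    have hSle : ∑ n, r n ≤ N * αmax := by
      calc ∑ n, r n ≤ ∑ _n : Fin N, αmax := Finset.sum_le_sum fun n _ => (hr n).2
      _ = N * αmax := by simp [mul_comm]
    have hden : 0 < s + c * ∑ n, r n ^ 2 := by positivity
    have hnum : a * (∑ n, r n) ^ 2 - e * ∑ n, r n ^ 2 + b * ∑ n, r n
        ≤ a * (N * αmax) ^ 2 + b * (N * αmax) := by
      have h2 : (∑ n, r n) ^ 2 ≤ (N * αmax) ^ 2 := pow_le_pow_left₀ hS0 hSle 2
      nlinarith
    unfold risAmpObj
    rcases le_or_gt (a * (∑ n, r n) ^ 2 - e * ∑ n, r n ^ 2 + b * ∑ n, r n) 0 with h | h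
    · exact le_trans (div_nonpos_of_nonpos_of_nonneg h hden.le) hB0
    · exact div_le_div₀ (by positivity) hnum hs (by nlinarith)
  have hsub : ((fun t : ℝ => risAmpObj N a e b c s (fun _ => t)) '' Set.Icc (0 : ℝ) αmax)
      ⊆ risAmpObj N a e b c s '' {r | ∀ n, r n ∈ Set.Icc (0 : ℝ) αmax} := by
    rintro x ⟨t, ht, rfl⟩
    exact ⟨fun _ => t, fun n => ht, rfl⟩
  have hne2 : ((fun t : ℝ => risAmpObj N a e b c s (fun _ => t)) '' Set.Icc (0 : ℝ) αmax).Nonempty :=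
    ⟨_, 0, ⟨le_refl _, hαmax⟩, rfl⟩
  have hbdd1 : BddAbove (risAmpObj N a e b c s '' {r | ∀ n, r n ∈ Set.Icc (0 : ℝ) αmax}) := by
    refine ⟨B, ?_⟩
    rintro x ⟨r, hr, rfl⟩
    exact hbound r hr
  have hbdd2 : BddAbove ((fun t : ℝ => risAmpObj N a e b c s (fun _ => t)) '' Set.Icc (0 : ℝ) αmax) :=
    hbdd1.mono hsub
  apply le_antisymm
  · apply csSup_le (hne2.mono hsub)
    rintro x ⟨r, hr, rfl⟩
    obtain ⟨t, ht, hge⟩ := key r hr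
    exact le_trans hge (le_csSup hbdd2 ⟨t, ht, rfl⟩)
  · exact csSup_le_csSup hbdd1 hne2 hsub
end

section
/- Let 𝒜 ∈ ℝ, ℬ > 0, 𝒞 > 0 and s > 0 be reals, define f(α) = (𝒜α² + ℬα)/(s + 𝒞α²) for α ≥ 0, and set α* = (𝒜 s + √(𝒜² s² + ℬ² 𝒞 s)) / (ℬ 𝒞). Then α* > 0, f is monotonically increasing on [0, α*] and monotonically decreasing on [α*, ∞); consequently, for every α_max ≥ 0 and every α ∈ [0, α_max], f(α) ≤ f(min(α*, α_max)), i.e., the maximum of f over [0, α_max] is attained at min(α*, α_max). -/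
set_option maxHeartbeats 800000


/-- Optimal amplification with a positive coherent cross term: for
`f(α) = (𝒜α² + ℬα)/(s + 𝒞α²)` with `ℬ, 𝒞, s > 0` and
`α* = (𝒜s + √(𝒜²s² + ℬ²𝒞s))/(ℬ𝒞)`, one has `α* > 0`, `f` is monotonically increasing
on `[0, α*]` and decreasing on `[α*, ∞)`, so the maximum of `f` over `[0, α_max]` is
attained at `min(α*, α_max)`. -/
theorem amp_opt_unimodal (A B C s : ℝ) (hB : 0 < B) (hC : 0 < C) (hs : 0 < s)
    (αstar : ℝ) (hstar : αstar = (A * s + Real.sqrt (A ^ 2 * s ^ 2 + B ^ 2 * C * s)) / (B * C)) :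
    0 < αstar ∧
    MonotoneOn (fun α : ℝ => (A * α ^ 2 + B * α) / (s + C * α ^ 2)) (Set.Icc 0 αstar) ∧
    AntitoneOn (fun α : ℝ => (A * α ^ 2 + B * α) / (s + C * α ^ 2)) (Set.Ici αstar) ∧
    ∀ αmax : ℝ, 0 ≤ αmax → ∀ α ∈ Set.Icc (0 : ℝ) αmax,
      (A * α ^ 2 + B * α) / (s + C * α ^ 2)
        ≤ (A * (min αstar αmax) ^ 2 + B * (min αstar αmax)) / (s + C * (min αstar αmax) ^ 2) := by
  set r := Real.sqrt (A ^ 2 * s ^ 2 + B ^ 2 * C * s) with hr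
  have hBC : 0 < B * C := mul_pos hB hC
  have hBBCs : 0 < B ^ 2 * C * s := by positivity
  have hrad : (0:ℝ) < A ^ 2 * s ^ 2 + B ^ 2 * C * s := by positivity
  have hr2 : r ^ 2 = A ^ 2 * s ^ 2 + B ^ 2 * C * s := Real.sq_sqrt hrad.le
  have hrpos : 0 < r := Real.sqrt_pos.2 hrad
  have hnum : 0 < A * s + r := by
    rcases le_or_gt 0 (A * s) with h | h
    · linarith
    · have h2 : (-(A * s)) ^ 2 < r ^ 2 := by rw [hr2]; nlinarith
      have h3 : -(A * s) < r := lt_of_pow_lt_pow_left₀ 2 hrpos.le h2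
      linarith
  have hαpos : 0 < αstar := by rw [hstar]; exact div_pos hnum hBC
  have hBCα : B * C * αstar = A * s + r := by
    rw [hstar]; field_simp
  -- key quadratic identity: B C α*² = 2 A s α* + B s
  have hkey : B * C * αstar ^ 2 = 2 * (A * s) * αstar + B * s := by
    have h1 : B * C * (B * C * αstar ^ 2) = B * C * (2 * (A * s) * αstar + B * s) := by
      linear_combination (B * C * αstar - A * s + r) * hBCα + hr2
    exact mul_left_cancel₀ hBC.ne' h1
  have hden : ∀ α : ℝ, 0 < s + C * α ^ 2 := fun α => by positivity
  -- increasing part: for 0 ≤ x, y ≤ α*, the cross quantity is nonneg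
  have hstep : ∀ x y : ℝ, 0 ≤ x → x ≤ αstar → 0 ≤ y → y ≤ αstar →
      0 ≤ A * s * (x + y) + B * s - B * C * (x * y) := by
    intro x y hx hxα hy hyα
    rcases le_or_gt (B * C * y) (A * s) with h | h
    · have hAs : 0 ≤ A * s := le_trans (mul_nonneg hBC.le hy) h
      nlinarith [mul_nonneg hx (sub_nonneg.2 h), mul_nonneg hy hAs, mul_pos hB hs]
    · rcases le_or_gt (B * C * x) (A * s) with h2 | h2
      · have hAs : 0 ≤ A * s := le_trans (mul_nonneg hBC.le hx) h2
        nlinarith [mul_nonneg hy (sub_nonneg.2 h2), mul_nonneg hx hAs, mul_pos hB hs]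
      · -- h(x,y) = (α*-y)(BCα*-As) + (α*-x)(BCy-As), using hkey
        nlinarith [mul_nonneg (sub_nonneg.2 hyα) (show (0:ℝ) ≤ B * C * αstar - A * s by
            linarith [hBCα, hrpos]),
          mul_nonneg (sub_nonneg.2 hxα) (sub_nonneg.2 h.le), hkey]
  have hmono : MonotoneOn (fun α : ℝ => (A * α ^ 2 + B * α) / (s + C * α ^ 2))
      (Set.Icc 0 αstar) := by
    intro x hx y hy hxy
    simp only
    rw [div_le_div_iff₀ (hden x) (hden y)]
    have h := hstep x y hx.1 hx.2 hy.1 hy.2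
    nlinarith [mul_nonneg (sub_nonneg.2 hxy) h]
  have hanti : AntitoneOn (fun α : ℝ => (A * α ^ 2 + B * α) / (s + C * α ^ 2))
      (Set.Ici αstar) := by
    intro x hx y hy hxy
    simp only
    rw [div_le_div_iff₀ (hden y) (hden x)]
    have hx' : αstar ≤ x := hx
    have h1 : A * s < B * C * x := by
      have := mul_le_mul_of_nonneg_left hx' hBC.le
      nlinarith [hBCα, hrpos]
    have e1 : 0 ≤ B * C * x ^ 2 - 2 * (A * s) * x - B * s := by
      nlinarith [mul_nonneg (sub_nonneg.2 hx') (sub_nonneg.2 h1.le),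
        mul_nonneg (sub_nonneg.2 hx') (show (0:ℝ) ≤ B * C * αstar - A * s by
          linarith [hBCα, hrpos]), hkey]
    have hneg : A * s * (x + y) + B * s - B * C * (x * y) ≤ 0 := by
      nlinarith [mul_nonneg (sub_nonneg.2 hxy) (sub_nonneg.2 h1.le), e1]
    nlinarith [mul_nonneg (sub_nonneg.2 hxy) (neg_nonneg.2 hneg)]
  refine ⟨hαpos, hmono, hanti, ?_⟩
  intro αmax hαmax α hα
  rcases le_total α (min αstar αmax) with hle | hge
  · exact hmono ⟨hα.1, hle.trans (min_le_left _ _)⟩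
      ⟨le_min hαpos.le hαmax, min_le_left _ _⟩ hle
  · rcases le_total αstar αmax with h | h
    · rw [min_eq_left h] at hge ⊢
      exact hanti (Set.mem_Ici.2 le_rfl) (Set.mem_Ici.2 hge) hge
    · rw [min_eq_right h] at hge ⊢
      rw [le_antisymm hα.2 hge]
end
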